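/- arXiv:1808.01351 — 2 statements merged into one kernel-verified Lean document; each statement's English description precedes it below -/
import Mathlib

section
/- If 𝒯 is non-discriminatory for binary sets, then every element of 𝒯 is an extreme point of the closed convex hull T of 𝒯; that is, 𝒯 = ∂T. -/
open MeasureTheory Set

section Defs

variable {Θ : Type*} [Fintype Θ]

/-- The value function `v_A(s) = max_{a ∈ A} ∑_θ a(θ) s(θ)`. -/
noncomputable def valueFn (A : Set (Θ → ℝ)) (s : Θ → ℝ) : ℝ :=
  sSup ((fun a => ∑ θ, a θ * s θ) '' A)

/-- A binary set: one or two elements. -/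
def Binary (A : Set (Θ → ℝ)) : Prop := A.ncard = 1 ∨ A.ncard = 2

/-- An information structure on `S`: a Borel probability measure supported on `S`. -/
def IsInfoStructure (S : Set (Θ → ℝ)) (π : Measure (Θ → ℝ)) : Prop :=
  IsProbabilityMeasure π ∧ π Sᶜ = 0

/-- The skill distribution `p_π(θ) = ∫_S s(θ) dπ(s)` induced by `π`. -/
noncomputable def skillDist (S : Set (Θ → ℝ)) (π : Measure (Θ → ℝ)) : Θ → ℝ :=
  fun θ => ∫ s in S, s θ ∂π

/-- `S` is non-discriminatory. -/
def NonDiscriminatory (S : Set (Θ → ℝ)) : Prop :=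
  ∀ π π' : Measure (Θ → ℝ), IsInfoStructure S π → IsInfoStructure S π' →
    ∀ A : Set (Θ → ℝ), A.Finite → A.Nonempty →
      skillDist S π = skillDist S π' →
      ∫ t in S, valueFn A t ∂π = ∫ t in S, valueFn A t ∂π'

/-- `S` is non-discriminatory for binary sets. -/
def NonDiscriminatoryBinary (S : Set (Θ → ℝ)) : Prop :=
  ∀ π π' : Measure (Θ → ℝ), IsInfoStructure S π → IsInfoStructure S π' →
    ∀ A : Set (Θ → ℝ), Binary A →
      skillDist S π = skillDist S π' →
      ∫ t in S, valueFn A t ∂π = ∫ t in S, valueFn A t ∂π'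

/-- `S` is identified. -/
def Identified (S : Set (Θ → ℝ)) : Prop :=
  ∀ π π' : Measure (Θ → ℝ), IsInfoStructure S π → IsInfoStructure S π' →
    skillDist S π = skillDist S π' → π = π'

/-- `S` admits fair valuations. -/
def FairValuations (S : Set (Θ → ℝ)) : Prop :=
  ∀ A : Set (Θ → ℝ), A.Finite → A.Nonempty →
    ∃ α : Θ → ℝ, ∀ t ∈ S, valueFn A t = ∑ θ, α θ * t θ

/-- `S` admits fair valuations for binary sets. -/
def FairValuationsBinary (S : Set (Θ → ℝ)) : Prop :=
  ∀ A : Set (Θ → ℝ), Binary A →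
    ∃ α : Θ → ℝ, ∀ t ∈ S, valueFn A t = ∑ θ, α θ * t θ

/-- `W_A(p)`: value of optimal information design with skill distribution `p`,
over information structures on `S`. -/
noncomputable def Wfn (A S : Set (Θ → ℝ)) (p : Θ → ℝ) : ℝ :=
  sSup {x | ∃ π : Measure (Θ → ℝ), IsInfoStructure S π ∧ skillDist S π = p ∧
    x = ∫ t in S, valueFn A t ∂π}

/-- A function is affine on `T`. -/
def AffineOnSet (W : (Θ → ℝ) → ℝ) (T : Set (Θ → ℝ)) : Prop :=
  ∀ p ∈ T, ∀ q ∈ T, ∀ γ : ℝ, 0 ≤ γ → γ ≤ 1 →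
    W (γ • p + (1 - γ) • q) = γ * W p + (1 - γ) * W q

end Defs

variable {Θ : Type*} [Fintype Θ] [Nonempty Θ]


section AuxGeom

lemma dite_sum_aux {M : Type*} [AddCommMonoid M] {c N : ℕ} (hcN : c ≤ N) {ι : Type*} [Fintype ι]
    (e : Fin c ≃ ι) (g : ι → M) :
    ∑ i : Fin N, (if h : (i : ℕ) < c then g (e ⟨i, h⟩) else 0) = ∑ j, g j := by
  rw [Fin.sum_univ_eq_sum_range (fun n => if h : n < c then g (e ⟨n, h⟩) else 0) N]
  rw [← Finset.sum_subset (Finset.range_subset_range.2 hcN)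
    (fun i _ hi => dif_neg (by simpa using hi))]
  rw [← Fin.sum_univ_eq_sum_range (fun n => if h : n < c then g (e ⟨n, h⟩) else 0) c]
  rw [← e.sum_comp g]
  refine Finset.sum_congr rfl fun i _ => ?_
  simp [i.isLt]

lemma aux_isCompact_convexHull {E : Type*} [NormedAddCommGroup E] [NormedSpace ℝ E]
    [FiniteDimensional ℝ E] {K : Set E} (hK : IsCompact K) : IsCompact (convexHull ℝ K) := by
  rcases K.eq_empty_or_nonempty with rfl | ⟨x₀, hx₀⟩
  · simp
  set N := Module.finrank ℝ E + 1 with hN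
  have hf : Continuous fun p : (Fin N → ℝ) × (Fin N → E) => ∑ i, p.1 i • p.2 i :=
    continuous_finset_sum _ fun i _ =>
      ((continuous_apply i).comp continuous_fst).smul ((continuous_apply i).comp continuous_snd)
  have hD : IsCompact ((stdSimplex ℝ (Fin N)) ×ˢ Set.univ.pi fun _ : Fin N => K) :=
    (isCompact_stdSimplex ℝ _).prod (isCompact_univ_pi fun _ => hK)
  have himg : (fun p : (Fin N → ℝ) × (Fin N → E) => ∑ i, p.1 i • p.2 i) ''
      ((stdSimplex ℝ (Fin N)) ×ˢ Set.univ.pi fun _ : Fin N => K) = convexHull ℝ K := by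
    apply Subset.antisymm
    · rintro _ ⟨⟨w, z⟩, ⟨hw, hz⟩, rfl⟩
      exact (convex_convexHull ℝ K).sum_mem (fun i _ => hw.1 i) hw.2
        (fun i _ => subset_convexHull ℝ K (hz i (mem_univ i)))
    · intro x hx
      obtain ⟨ι, hι, z, w, hrange, hindep, hpos, hsum, hxx⟩ :=
        eq_pos_convex_span_of_mem_convexHull hx
      have hcard : Fintype.card ι ≤ N := by
        refine hindep.card_le_finrank_succ.trans ?_
        exact Nat.add_le_add_right (Submodule.finrank_le _) 1
      set c := Fintype.card ι with hc
      let e : Fin c ≃ ι := (Fintype.equivFin ι).symm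
      refine ⟨⟨fun i => if h : (i : ℕ) < c then w (e ⟨i, h⟩) else 0,
              fun i => if h : (i : ℕ) < c then z (e ⟨i, h⟩) else x₀⟩, ⟨⟨?_, ?_⟩, ?_⟩, ?_⟩
      · intro i; dsimp only; split_ifs with h
        · exact (hpos _).le
        · exact le_refl 0
      · exact (dite_sum_aux hcard e w).trans hsum
      · intro i _; dsimp only; split_ifs with h
        · exact hrange ⟨_, rfl⟩
        · exact hx₀
      · dsimp only
        rw [show ∑ i : Fin N, (if h : (i : ℕ) < c then w (e ⟨i, h⟩) else 0) •
              (if h : (i : ℕ) < c then z (e ⟨i, h⟩) else x₀)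
            = ∑ i : Fin N, (if h : (i : ℕ) < c then w (e ⟨i, h⟩) • z (e ⟨i, h⟩) else 0) from
          Finset.sum_congr rfl fun i _ => by split_ifs with h <;> simp]
        exact (dite_sum_aux hcard e fun j => w j • z j).trans hxx
  rw [← himg]
  exact hD.image hf

end AuxGeom

section AuxMeas
variable {Θ : Type*} [Fintype Θ]

lemma aux_integrable_dirac {f : (Θ → ℝ) → ℝ} (a : Θ → ℝ) :
    Integrable f (Measure.dirac a) :=
  (integrable_const (f a)).congr (ae_eq_dirac f).symm

lemma aux_restrict_eq_self {S : Set (Θ → ℝ)} (hS : MeasurableSet S) {ι : Type*} [Fintype ι]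
    (w : ι → ℝ) (z : ι → Θ → ℝ) (hz : ∀ i, z i ∈ S) :
    (∑ i, ENNReal.ofReal (w i) • Measure.dirac (z i)) Sᶜ = 0 := by
  rw [Measure.finset_sum_apply]
  refine Finset.sum_eq_zero fun i _ => ?_
  rw [Measure.smul_apply, Measure.dirac_apply' _ hS.compl,
    Set.indicator_of_notMem (by simp [hz i])]
  simp

lemma aux_setIntegral_sum {S : Set (Θ → ℝ)} (hS : MeasurableSet S) {ι : Type*} [Fintype ι]
    (w : ι → ℝ) (z : ι → Θ → ℝ) (hw : ∀ i, 0 ≤ w i) (hz : ∀ i, z i ∈ S)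
    (f : (Θ → ℝ) → ℝ) :
    ∫ x in S, f x ∂(∑ i, ENNReal.ofReal (w i) • Measure.dirac (z i)) = ∑ i, w i * f (z i) := by
  have hres : (∑ i, ENNReal.ofReal (w i) • Measure.dirac (z i)).restrict S
      = ∑ i, ENNReal.ofReal (w i) • Measure.dirac (z i) := by
    refine Measure.restrict_eq_self_of_ae_mem ?_
    rw [ae_iff]
    simpa using aux_restrict_eq_self hS w z hz
  rw [hres, integral_finset_sum_measure
    (fun i _ => (aux_integrable_dirac (z i)).smul_measure ENNReal.ofReal_ne_top)]
  refine Finset.sum_congr rfl fun i _ => ?_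
  rw [integral_smul_measure, integral_dirac, ENNReal.toReal_ofReal (hw i), smul_eq_mul]

lemma aux_isInfoStructure {S : Set (Θ → ℝ)} (hS : MeasurableSet S) {ι : Type*} [Fintype ι]
    (w : ι → ℝ) (z : ι → Θ → ℝ) (hw : ∀ i, 0 ≤ w i) (hsum : ∑ i, w i = 1) (hz : ∀ i, z i ∈ S) :
    IsInfoStructure S (∑ i, ENNReal.ofReal (w i) • Measure.dirac (z i)) := by
  refine ⟨⟨?_⟩, aux_restrict_eq_self hS w z hz⟩
  rw [Measure.finset_sum_apply]
  simp only [Measure.smul_apply, measure_univ, smul_eq_mul, mul_one]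
  rw [← ENNReal.ofReal_sum_of_nonneg (fun i _ => hw i), hsum, ENNReal.ofReal_one]

lemma aux_skillDist_sum {S : Set (Θ → ℝ)} (hS : MeasurableSet S) {ι : Type*} [Fintype ι]
    (w : ι → ℝ) (z : ι → Θ → ℝ) (hw : ∀ i, 0 ≤ w i) (hz : ∀ i, z i ∈ S) :
    skillDist S (∑ i, ENNReal.ofReal (w i) • Measure.dirac (z i))
      = fun θ => ∑ i, w i * z i θ := by
  funext θ
  exact aux_setIntegral_sum hS w z hw hz (fun s => s θ)

lemma aux_isInfoStructure_dirac {S : Set (Θ → ℝ)} (hS : MeasurableSet S) {t : Θ → ℝ} (ht : t ∈ S) :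
    IsInfoStructure S (Measure.dirac t) := by
  refine ⟨inferInstance, ?_⟩
  rw [Measure.dirac_apply' _ hS.compl, Set.indicator_of_notMem (by simp [ht])]

lemma aux_skillDist_dirac {S : Set (Θ → ℝ)} (hS : MeasurableSet S) {t : Θ → ℝ} (ht : t ∈ S) :
    skillDist S (Measure.dirac t) = t := by
  classical
  funext θ
  rw [skillDist, setIntegral_dirac (fun s => s θ) t S, if_pos ht]

lemma aux_setIntegral_dirac {S : Set (Θ → ℝ)} (hS : MeasurableSet S) {t : Θ → ℝ} (ht : t ∈ S)
    (f : (Θ → ℝ) → ℝ) : ∫ x in S, f x ∂(Measure.dirac t) = f t := by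
  classical
  rw [setIntegral_dirac f t S, if_pos ht]

lemma valueFn_pair (a b s : Θ → ℝ) :
    valueFn {a, b} s = max (∑ θ, a θ * s θ) (∑ θ, b θ * s θ) := by
  rw [valueFn, Set.image_pair, csSup_pair]

lemma binary_pair (a b : Θ → ℝ) : Binary {a, b} := by
  rcases eq_or_ne a b with rfl | h
  · left; simp
  · right; exact Set.ncard_pair h

end AuxMeas

 
theorem stmt3 (𝒯 : Set (Θ → ℝ)) (h𝒯 : 𝒯 ⊆ stdSimplex ℝ Θ) (h𝒯c : IsClosed 𝒯)
    (hnd : NonDiscriminatoryBinary 𝒯) :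
    𝒯 = Set.extremePoints ℝ (closure (convexHull ℝ 𝒯)) := by
  classical
  have hScomp : IsCompact 𝒯 := (isCompact_stdSimplex ℝ Θ).of_isClosed_subset h𝒯c h𝒯
  have hch : IsCompact (convexHull ℝ 𝒯) := aux_isCompact_convexHull hScomp
  rw [hch.isClosed.closure_eq]
  refine Subset.antisymm ?_ extremePoints_convexHull_subset
  intro t ht
  have hSm : MeasurableSet 𝒯 := h𝒯c.measurableSet
  have hsub : convexHull ℝ 𝒯 ⊆ stdSimplex ℝ Θ := convexHull_min h𝒯 (convex_stdSimplex ℝ Θ)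
  rw [mem_extremePoints]
  refine ⟨subset_convexHull ℝ 𝒯 ht, fun x hx y hy hseg => ?_⟩
  suffices hxy : x = y by
    subst hxy
    rw [openSegment_same, mem_singleton_iff] at hseg
    exact ⟨hseg.symm, hseg.symm⟩
  by_contra hxy
  obtain ⟨γ, δ, hγ, hδ, hγδ, htγ⟩ := hseg
  obtain ⟨ι₁, hι₁, z₁, w₁, hr₁, hi₁, hp₁, hs₁, hx₁⟩ := eq_pos_convex_span_of_mem_convexHull hx
  obtain ⟨ι₂, hι₂, z₂, w₂, hr₂, hi₂, hp₂, hs₂, hx₂⟩ := eq_pos_convex_span_of_mem_convexHull hy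
  letI := hι₁; letI := hι₂
  have hs₁' : ∑ i, w₁ i = 1 := hs₁
  have hs₂' : ∑ j, w₂ j = 1 := hs₂
  have hx₁' : ∑ i, w₁ i • z₁ i = x := hx₁
  have hx₂' : ∑ j, w₂ j • z₂ j = y := hx₂
  set W : ι₁ ⊕ ι₂ → ℝ := Sum.elim (fun i => γ * w₁ i) fun j => δ * w₂ j with hW
  set Z : ι₁ ⊕ ι₂ → (Θ → ℝ) := Sum.elim z₁ z₂ with hZ
  have hWpos : ∀ k, 0 ≤ W k := by
    rintro (i | j)
    · exact mul_nonneg hγ.le (hp₁ i).le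
    · exact mul_nonneg hδ.le (hp₂ j).le
  have hZS : ∀ k, Z k ∈ 𝒯 := by rintro (i | j); exacts [hr₁ ⟨i, rfl⟩, hr₂ ⟨j, rfl⟩]
  have hWsum : ∑ k, W k = 1 := by
    rw [Fintype.sum_sum_type]
    simp only [hW, Sum.elim_inl, Sum.elim_inr]
    rw [← Finset.mul_sum, ← Finset.mul_sum, hs₁', hs₂', mul_one, mul_one, hγδ]
  set π' : Measure (Θ → ℝ) := ∑ k, ENNReal.ofReal (W k) • Measure.dirac (Z k) with hπ'
  have hskill : skillDist 𝒯 (Measure.dirac t) = skillDist 𝒯 π' := by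
    rw [aux_skillDist_dirac hSm ht, aux_skillDist_sum hSm W Z hWpos hZS]
    funext θ
    have hx₁θ := congrFun hx₁' θ
    have hx₂θ := congrFun hx₂' θ
    have htθ := congrFun htγ θ
    simp only [Finset.sum_apply, Pi.smul_apply, smul_eq_mul, Pi.add_apply] at hx₁θ hx₂θ htθ
    rw [Fintype.sum_sum_type]
    simp only [hW, hZ, Sum.elim_inl, Sum.elim_inr, mul_assoc]
    rw [← Finset.mul_sum, ← Finset.mul_sum, hx₁θ, hx₂θ]
    exact htθ.symm
  set d : Θ → ℝ := fun θ => x θ - y θ with hd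
  set cst : ℝ := ∑ θ, d θ * t θ with hcst
  set vA : Θ → ℝ := fun θ => d θ - cst with hvA
  set F : (Θ → ℝ) → ℝ := fun s => ∑ θ, vA θ * s θ with hF
  have hv : ∀ s, valueFn {vA, -vA} s = |F s| := by
    intro s
    rw [valueFn_pair]
    have h1 : ∑ θ, (-vA) θ * s θ = -F s := by
      simp [hF, Finset.sum_neg_distrib]
    rw [h1, abs_eq_max_neg]
  have hFlin : ∀ {ι : Type _} [Fintype ι] (w : ι → ℝ) (z : ι → Θ → ℝ),
      F (∑ i, w i • z i) = ∑ i, w i * F (z i) := by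
    intro ι _ w z
    simp only [hF, Finset.sum_apply, Pi.smul_apply, smul_eq_mul, Finset.mul_sum]
    rw [Finset.sum_comm]
    exact Finset.sum_congr rfl fun i _ => Finset.sum_congr rfl fun θ _ => by ring
  have hFt : F t = 0 := by
    have h1 : ∑ θ, t θ = 1 := (h𝒯 ht).2
    simp only [hF, hvA, sub_mul]
    rw [Finset.sum_sub_distrib, ← Finset.mul_sum, h1, mul_one, ← hcst, sub_self]
  have hFx : F x = ∑ i, w₁ i * F (z₁ i) := by rw [← hx₁', hFlin]
  have hFy : F y = ∑ j, w₂ j * F (z₂ j) := by rw [← hx₂', hFlin]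
  have hdsum : ∑ θ, d θ = 0 := by
    simp only [hd]
    rw [Finset.sum_sub_distrib, (hsub hx).2, (hsub hy).2, sub_self]
  have hFxy : F x - F y = ∑ θ, d θ ^ 2 := by
    have h1 : F x - F y = ∑ θ, vA θ * d θ := by
      simp only [hF, ← Finset.sum_sub_distrib]
      exact Finset.sum_congr rfl fun θ _ => by simp only [hd]; ring
    rw [h1]
    simp only [hvA, sub_mul]
    rw [Finset.sum_sub_distrib, ← Finset.mul_sum, hdsum, mul_zero, sub_zero]
    exact Finset.sum_congr rfl fun θ _ => by ring
  have hFne : F x ≠ F y := by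
    obtain ⟨θ₀, hθ₀⟩ := Function.ne_iff.mp hxy
    have hpos : 0 < ∑ θ, d θ ^ 2 := by
      refine Finset.sum_pos' (fun θ _ => sq_nonneg _) ⟨θ₀, Finset.mem_univ _, ?_⟩
      exact sq_pos_of_ne_zero (sub_ne_zero.mpr hθ₀)
    intro h
    rw [h, sub_self] at hFxy
    exact absurd hFxy.symm hpos.ne'
  have hmain := hnd (Measure.dirac t) π' (aux_isInfoStructure_dirac hSm ht)
    (aux_isInfoStructure hSm W Z hWpos hWsum hZS) {vA, -vA} (binary_pair vA (-vA)) hskill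
  rw [hπ', aux_setIntegral_dirac hSm ht, aux_setIntegral_sum hSm W Z hWpos hZS] at hmain
  rw [hv t, hFt, abs_zero] at hmain
  have hmain' : 0 = ∑ k, W k * |F (Z k)| := by
    rw [hmain]
    exact Finset.sum_congr rfl fun k _ => by rw [hv]
  have hsplit : ∑ k, W k * |F (Z k)|
      = γ * ∑ i, w₁ i * |F (z₁ i)| + δ * ∑ j, w₂ j * |F (z₂ j)| := by
    rw [Fintype.sum_sum_type]
    simp only [hW, hZ, Sum.elim_inl, Sum.elim_inr, mul_assoc]
    rw [← Finset.mul_sum, ← Finset.mul_sum]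
  have habs1 : |F x| ≤ ∑ i, w₁ i * |F (z₁ i)| := by
    calc |F x| = |∑ i, w₁ i * F (z₁ i)| := by rw [hFx]
    _ ≤ ∑ i, |w₁ i * F (z₁ i)| := Finset.abs_sum_le_sum_abs _ _
    _ = ∑ i, w₁ i * |F (z₁ i)| := Finset.sum_congr rfl fun i _ => by
        rw [abs_mul, abs_of_nonneg (hp₁ i).le]
  have habs2 : |F y| ≤ ∑ j, w₂ j * |F (z₂ j)| := by
    calc |F y| = |∑ j, w₂ j * F (z₂ j)| := by rw [hFy]
    _ ≤ ∑ j, |w₂ j * F (z₂ j)| := Finset.abs_sum_le_sum_abs _ _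
    _ = ∑ j, w₂ j * |F (z₂ j)| := Finset.sum_congr rfl fun j _ => by
        rw [abs_mul, abs_of_nonneg (hp₂ j).le]
  have hpos : 0 < γ * ∑ i, w₁ i * |F (z₁ i)| + δ * ∑ j, w₂ j * |F (z₂ j)| := by
    rcases ne_iff_lt_or_gt.mp hFne with h | h
    · have : 0 < |F y| ∨ 0 < |F x| := by
        rcases eq_or_ne (F y) 0 with hy0 | hy0
        · exact Or.inr (abs_pos.mpr (by rw [hy0] at hFne; exact hFne))
        · exact Or.inl (abs_pos.mpr hy0)
      rcases this with h' | h'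
      · nlinarith [abs_nonneg (F x), habs1, habs2]
      · nlinarith [abs_nonneg (F y), habs1, habs2]
    · have : 0 < |F y| ∨ 0 < |F x| := by
        rcases eq_or_ne (F y) 0 with hy0 | hy0
        · exact Or.inr (abs_pos.mpr (by rw [hy0] at hFne; exact hFne))
        · exact Or.inl (abs_pos.mpr hy0)
      rcases this with h' | h'
      · nlinarith [abs_nonneg (F x), habs1, habs2]
      · nlinarith [abs_nonneg (F y), habs1, habs2]
  rw [hsplit] at hmain'
  linarith
end

section
/- For every finite nonempty A ⊆ ℝ^Θ and every p ∈ T, W_A(p) = Y_A(p), where Y_A is the concave envelope of v_A on T, i.e., Y_A(p) = inf{ l(p) : l an affine function on ℝ^Θ with v_A(t) ≤ l(t) for all t ∈ T }. -/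
open MeasureTheory Set

section AuxStmt12

open MeasureTheory Set

variable {Θ : Type*} [Fintype Θ]

lemma stmt12.valueFn_eq_sup' {A : Set (Θ → ℝ)} (hAfin : A.Finite) (hAne : A.Nonempty) (s : Θ → ℝ) :
    valueFn A s = hAfin.toFinset.sup' (by simpa using hAne) (fun a => ∑ θ, a θ * s θ) := by
  rw [Finset.sup'_eq_csSup_image, Set.Finite.coe_toFinset, valueFn]

lemma stmt12.continuous_valueFn {A : Set (Θ → ℝ)} (hAfin : A.Finite) (hAne : A.Nonempty) :
    Continuous (valueFn A) := by
  have h : valueFn A = fun s => hAfin.toFinset.sup' (by simpa using hAne)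
      (fun a => ∑ θ, a θ * s θ) := funext fun s => stmt12.valueFn_eq_sup' hAfin hAne s
  rw [h]
  exact Continuous.finset_sup'_apply _ fun a _ =>
    continuous_finset_sum _ fun θ _ => continuous_const.mul (continuous_apply θ)

lemma stmt12.basis_decomp [DecidableEq Θ] (t : Θ → ℝ) :
    t = ∑ θ, t θ • (Pi.single θ 1 : Θ → ℝ) := by
  ext j
  simp [Finset.sum_apply, Pi.single_apply, mul_ite, Finset.sum_ite_eq]

lemma stmt12.sum_dite_fin {M : Type*} [AddCommMonoid M] {N c : ℕ} (hc : c ≤ N) (F : Fin c → M) :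
    (∑ i : Fin N, if h : (i : ℕ) < c then F ⟨i, h⟩ else 0) = ∑ j : Fin c, F j := by
  have h1 : (∑ i : Fin N, if h : (i : ℕ) < c then F ⟨i, h⟩ else 0)
      = ∑ i ∈ Finset.univ.map (Fin.castLEEmb hc), if h : (i : ℕ) < c then F ⟨i, h⟩ else 0 := by
    symm
    apply Finset.sum_subset (Finset.subset_univ _)
    intro i _ hi
    rw [dif_neg]
    intro h
    exact hi (Finset.mem_map.2 ⟨⟨i, h⟩, Finset.mem_univ _, rfl⟩)
  rw [h1, Finset.sum_map]
  apply Finset.sum_congr rfl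
  intro j _
  have hj : ((Fin.castLEEmb hc j : Fin N) : ℕ) < c := by simpa using j.isLt
  rw [dif_pos hj]
  exact congrArg F (Fin.ext (by simp))

/-- convex hull of a nonempty compact set in a finite-dimensional normed space is compact -/
lemma stmt12.isCompact_convexHull_of_isCompact {E : Type*} [NormedAddCommGroup E]
    [NormedSpace ℝ E] [FiniteDimensional ℝ E] {G : Set E} (hG : IsCompact G) (hGne : G.Nonempty) :
    IsCompact (convexHull ℝ G) := by
  classical
  obtain ⟨g₀, hg₀⟩ := hGne
  have himg : convexHull ℝ G =
      (fun wz : (Fin (Module.finrank ℝ E + 1) → ℝ) × (Fin (Module.finrank ℝ E + 1) → E) =>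
        ∑ i, wz.1 i • wz.2 i) ''
        (stdSimplex ℝ (Fin (Module.finrank ℝ E + 1)) ×ˢ Set.univ.pi fun _ => G) := by
    apply Subset.antisymm
    · intro x hx
      rw [convexHull_eq_union] at hx
      simp only [mem_iUnion] at hx
      obtain ⟨t, hts, hai, hxt⟩ := hx
      have hcard : t.card ≤ Module.finrank ℝ E + 1 := by
        have h1 := hai.card_le_finrank_succ (k := ℝ)
        rw [Fintype.card_coe] at h1
        exact h1.trans (Nat.succ_le_succ (Submodule.finrank_le _))
      rw [Finset.convexHull_eq] at hxt
      obtain ⟨w₀, hw₀, hw₁, hx⟩ := hxt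
      rw [Finset.centerMass_eq_of_sum_1 _ _ hw₁] at hx
      set e : Fin t.card ≃ {x // x ∈ t} := t.equivFin.symm with he
      refine ⟨(fun i => if h : (i : ℕ) < t.card then w₀ (e ⟨i, h⟩) else 0,
               fun i => if h : (i : ℕ) < t.card then (e ⟨i, h⟩ : E) else g₀), ⟨⟨?_, ?_⟩, ?_⟩, ?_⟩
      · intro i
        dsimp only
        split
        · exact hw₀ _ (e _).2
        · exact le_rfl
      · dsimp only
        rw [stmt12.sum_dite_fin hcard (fun j => w₀ (e j)), Equiv.sum_comp e (fun y => w₀ y),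
          Finset.sum_coe_sort t w₀]
        exact hw₁
      · intro i _
        dsimp only
        split
        · exact hts (e _).2
        · exact hg₀
      · dsimp only
        have hterm : ∀ i : Fin (Module.finrank ℝ E + 1),
            (if h : (i : ℕ) < t.card then w₀ (e ⟨i, h⟩) else 0) •
              (if h : (i : ℕ) < t.card then (e ⟨i, h⟩ : E) else g₀)
            = if h : (i : ℕ) < t.card then w₀ (e ⟨i, h⟩) • (e ⟨i, h⟩ : E) else 0 := by
          intro i
          by_cases h : (i : ℕ) < t.card <;> simp [h]
        rw [Finset.sum_congr rfl fun i _ => hterm i,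
          stmt12.sum_dite_fin hcard (fun j => w₀ (e j) • (e j : E)),
          Equiv.sum_comp e (fun y : {x // x ∈ t} => w₀ y • (y : E)),
          Finset.sum_coe_sort t (fun y => w₀ y • y)]
        exact hx
    · rintro _ ⟨⟨w, z⟩, ⟨hw, hzG⟩, rfl⟩
      exact (convex_convexHull ℝ G).sum_mem (fun i _ => hw.1 i) hw.2
        (fun i _ => subset_convexHull ℝ G (hzG i (Set.mem_univ i)))
  rw [himg]
  exact ((isCompact_stdSimplex ℝ _).prod (isCompact_univ_pi fun _ => hG)).image
    (continuous_finset_sum _ fun i _ =>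
      ((continuous_apply i).comp continuous_fst).smul ((continuous_apply i).comp continuous_snd))

lemma stmt12.integrable_dirac {X : Type*} [MeasurableSpace X] [MeasurableSingletonClass X]
    {f : X → ℝ} (hf : StronglyMeasurable f) (a : X) : Integrable f (Measure.dirac a) := by
  refine ⟨hf.aestronglyMeasurable, ?_⟩
  rw [HasFiniteIntegral, lintegral_dirac]
  exact ENNReal.coe_lt_top

lemma stmt12.info_measure_eq_one {S : Set (Θ → ℝ)} (hSm : MeasurableSet S)
    {π : Measure (Θ → ℝ)} (hπ : IsInfoStructure S π) : π S = 1 := by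
  haveI := hπ.1
  exact (prob_compl_eq_zero_iff hSm).mp hπ.2

lemma stmt12.continuous_affine (c : ℝ) (y : Θ → ℝ) :
    Continuous (fun t : Θ → ℝ => c + ∑ θ, y θ * t θ) :=
  continuous_const.add (continuous_finset_sum _ fun θ _ =>
    continuous_const.mul (continuous_apply θ))

lemma stmt12.integral_affine {S : Set (Θ → ℝ)} (hSm : MeasurableSet S) (hSc : IsCompact S)
    {π : Measure (Θ → ℝ)} (hπ : IsInfoStructure S π) (c : ℝ) (y : Θ → ℝ) :
    ∫ t in S, (c + ∑ θ, y θ * t θ) ∂π = c + ∑ θ, y θ * skillDist S π θ := by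
  haveI := hπ.1
  have hint : ∀ θ : Θ, IntegrableOn (fun t : Θ → ℝ => y θ * t θ) S π := fun θ =>
    (continuous_const.mul (continuous_apply θ)).continuousOn.integrableOn_compact hSc
  rw [integral_add (show IntegrableOn (fun _ => c) S π from integrableOn_const hSc.measure_lt_top.ne)
    (integrable_finset_sum _ fun θ _ => hint θ), setIntegral_const,
    integral_finset_sum _ fun θ _ => hint θ, measureReal_def, stmt12.info_measure_eq_one hSm hπ]
  simp only [ENNReal.toReal_one, one_smul]
  congr 1
  exact Finset.sum_congr rfl fun θ _ => by rw [MeasureTheory.integral_const_mul]; rfl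

lemma stmt12.setIntegral_le_affine {S : Set (Θ → ℝ)} (hSm : MeasurableSet S) (hSc : IsCompact S)
    {π : Measure (Θ → ℝ)} (hπ : IsInfoStructure S π) {v : (Θ → ℝ) → ℝ} (hv : Continuous v)
    {c : ℝ} {y : Θ → ℝ} (hmaj : ∀ t ∈ S, v t ≤ c + ∑ θ, y θ * t θ) :
    ∫ t in S, v t ∂π ≤ c + ∑ θ, y θ * skillDist S π θ := by
  haveI := hπ.1
  rw [← stmt12.integral_affine hSm hSc hπ c y]
  exact setIntegral_mono_on (hv.continuousOn.integrableOn_compact hSc)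
    ((stmt12.continuous_affine c y).continuousOn.integrableOn_compact hSc) hSm hmaj

lemma stmt12.discrete_info_structure {S : Set (Θ → ℝ)} (hSm : MeasurableSet S)
    {ι : Type} [Fintype ι] (w : ι → ℝ) (z : ι → Θ → ℝ) (hw0 : ∀ i, 0 ≤ w i)
    (hw1 : ∑ i, w i = 1) (hz : ∀ i, z i ∈ S) :
    ∃ π : Measure (Θ → ℝ), IsInfoStructure S π ∧
      ∀ f : (Θ → ℝ) → ℝ, Continuous f → ∫ t in S, f t ∂π = ∑ i, w i * f (z i) := by
  classical
  set π : Measure (Θ → ℝ) := ∑ i : ι, (ENNReal.ofReal (w i)) • Measure.dirac (z i) with hπdef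
  have hcompl : π Sᶜ = 0 := by
    rw [hπdef, Measure.finset_sum_apply]
    refine Finset.sum_eq_zero fun i _ => ?_
    rw [Measure.smul_apply, Measure.dirac_apply' _ hSm.compl,
      Set.indicator_of_notMem (by simp [hz i])]
    simp
  have hprob : IsProbabilityMeasure π := by
    constructor
    rw [hπdef, Measure.finset_sum_apply]
    simp only [Measure.smul_apply, measure_univ, smul_eq_mul, mul_one]
    rw [← ENNReal.ofReal_sum_of_nonneg fun i _ => hw0 i, hw1, ENNReal.ofReal_one]
  have hres : π.restrict S = π := by
    apply Measure.restrict_eq_self_of_ae_mem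
    rw [ae_iff]
    convert hcompl using 2
    rfl
  refine ⟨π, ⟨hprob, hcompl⟩, fun f hf => ?_⟩
  rw [hres, hπdef, integral_finset_sum_measure fun i _ =>
    (stmt12.integrable_dirac hf.stronglyMeasurable (z i)).smul_measure ENNReal.ofReal_ne_top]
  refine Finset.sum_congr rfl fun i _ => ?_
  rw [integral_smul_measure, integral_dirac, smul_eq_mul, ENNReal.toReal_ofReal (hw0 i)]

end AuxStmt12

variable {Θ : Type*} [Fintype Θ] [Nonempty Θ]

theorem stmt12 (𝒯 : Set (Θ → ℝ)) (h𝒯 : 𝒯 ⊆ stdSimplex ℝ Θ) (h𝒯c : IsClosed 𝒯)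
    (A : Set (Θ → ℝ)) (hAfin : A.Finite) (hAne : A.Nonempty)
    (p : Θ → ℝ) (hp : p ∈ closure (convexHull ℝ 𝒯)) :
    Wfn A (closure (convexHull ℝ 𝒯)) p =
      sInf {x | ∃ (c : ℝ) (y : Θ → ℝ),
        (∀ t ∈ closure (convexHull ℝ 𝒯), valueFn A t ≤ c + ∑ θ, y θ * t θ) ∧
        x = c + ∑ θ, y θ * p θ} := by
  classical
  set S : Set (Θ → ℝ) := closure (convexHull ℝ 𝒯) with hSdef
  have hSsub : S ⊆ stdSimplex ℝ Θ :=
    closure_minimal (convexHull_min h𝒯 (convex_stdSimplex ℝ Θ)) (isClosed_stdSimplex ℝ Θ)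
  have hScomp : IsCompact S :=
    (isCompact_stdSimplex ℝ Θ).of_isClosed_subset isClosed_closure hSsub
  have hSm : MeasurableSet S := isClosed_closure.measurableSet
  have hvcont : Continuous (valueFn A) := stmt12.continuous_valueFn hAfin hAne
  obtain ⟨M, hM⟩ : ∃ M, ∀ t ∈ S, valueFn A t ≤ M := by
    obtain ⟨M, hM⟩ := (hScomp.image hvcont).bddAbove
    exact ⟨M, fun t ht => hM (mem_image_of_mem _ ht)⟩
  set WS : Set ℝ := {x | ∃ π : Measure (Θ → ℝ), IsInfoStructure S π ∧ skillDist S π = p ∧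
    x = ∫ t in S, valueFn A t ∂π} with hWSdef
  set IS : Set ℝ := {x | ∃ (c : ℝ) (y : Θ → ℝ),
    (∀ t ∈ S, valueFn A t ≤ c + ∑ θ, y θ * t θ) ∧ x = c + ∑ θ, y θ * p θ} with hISdef
  have hcomb : ∀ (ι : Type) [Fintype ι], ∀ (w : ι → ℝ) (z : ι → Θ → ℝ), (∀ i, 0 ≤ w i) →
      ∑ i, w i = 1 → (∀ i, z i ∈ S) → (∑ i, w i • z i = p) →
      (∑ i, w i * valueFn A (z i)) ∈ WS := by
    intro ι _ w z hw0 hw1 hz hbar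
    obtain ⟨π, hπ, hint⟩ := stmt12.discrete_info_structure hSm w z hw0 hw1 hz
    refine ⟨π, hπ, ?_, (hint _ hvcont).symm⟩
    funext θ
    show (∫ s in S, s θ ∂π) = p θ
    rw [hint _ (continuous_apply θ), ← hbar]
    simp [Finset.sum_apply]
  have hp_mem : valueFn A p ∈ WS := by
    have h := hcomb PUnit (fun _ => 1) (fun _ => p) (fun _ => zero_le_one)
      (by simp) (fun _ => hp) (by simp)
    simpa using h
  have hWSne : WS.Nonempty := ⟨_, hp_mem⟩
  have hWle : ∀ x ∈ WS, ∀ c (y : Θ → ℝ), (∀ t ∈ S, valueFn A t ≤ c + ∑ θ, y θ * t θ) →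
      x ≤ c + ∑ θ, y θ * p θ := by
    rintro x ⟨π, hπ, hskill, rfl⟩ c y hmaj
    have h := stmt12.setIntegral_le_affine hSm hScomp hπ hvcont hmaj
    rwa [hskill] at h
  have hWSbdd : BddAbove WS := by
    refine ⟨M, fun x hx => ?_⟩
    have h := hWle x hx M 0 (fun t ht => by simpa using hM t ht)
    simpa using h
  have hISne : IS.Nonempty :=
    ⟨M + ∑ θ, (0 : Θ → ℝ) θ * p θ, M, 0, fun t ht => by simpa using hM t ht, rfl⟩
  have hISbdd : BddBelow IS := by
    refine ⟨valueFn A p, ?_⟩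
    rintro x ⟨c, y, hmaj, rfl⟩
    exact hmaj p hp
  have hW : Wfn A S p = sSup WS := rfl
  rw [hW]
  apply le_antisymm
  · exact csSup_le hWSne fun x hx => le_csInf hISne
      (by rintro b ⟨c, y, hmaj, rfl⟩; exact hWle x hx c y hmaj)
  · have key : ∀ ε : ℝ, 0 < ε → sInf IS ≤ sSup WS + ε := by
      intro ε hε
      set W : ℝ := sSup WS with hWdef
      set G : Set ((Θ → ℝ) × ℝ) := (fun t => (t, valueFn A t)) '' S with hGdef
      have hGcomp : IsCompact G := hScomp.image (continuous_id.prodMk hvcont)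
      have hGne : G.Nonempty := ⟨_, mem_image_of_mem _ hp⟩
      have hKcomp : IsCompact (convexHull ℝ G) :=
        stmt12.isCompact_convexHull_of_isCompact hGcomp hGne
      have hzK : ((p, W + ε) : (Θ → ℝ) × ℝ) ∉ convexHull ℝ G := by
        intro hmem
        rw [mem_convexHull_iff_exists_fintype] at hmem
        obtain ⟨ι, hι, w, zz, hw0, hw1, hzG, hsum⟩ := hmem
        have hzz : ∀ i, ∃ t, t ∈ S ∧ (t, valueFn A t) = zz i := fun i => hzG i
        choose t ht heq using hzz
        have h1 : ∑ i, w i • t i = p := by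
          have h := congrArg Prod.fst hsum
          rw [Prod.fst_sum] at h
          simpa [← heq, Prod.smul_mk] using h
        have h2 : ∑ i, w i * valueFn A (t i) = W + ε := by
          have h := congrArg Prod.snd hsum
          rw [Prod.snd_sum] at h
          simpa [← heq, Prod.smul_mk, smul_eq_mul] using h
        have hmemWS := hcomb ι w t hw0 hw1 ht h1
        have hle := le_csSup hWSbdd hmemWS
        rw [h2] at hle
        have : (0:ℝ) < ε := hε
        linarith
      obtain ⟨f, u, hfK, hfz⟩ := geometric_hahn_banach_closed_point
        (convex_convexHull ℝ G) hKcomp.isClosed hzK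
      set β : ℝ := f (0, 1) with hβdef
      have hdecomp : ∀ (t : Θ → ℝ) (r : ℝ), f (t, r) = f (t, 0) + r * β := by
        intro t r
        have h : ((t, r) : (Θ → ℝ) × ℝ) = (t, (0:ℝ)) + r • ((0 : Θ → ℝ), (1:ℝ)) := by
          simp [Prod.ext_iff]
        rw [h, map_add, _root_.map_smul, smul_eq_mul]
      have hfS : ∀ t ∈ S, f (t, 0) + valueFn A t * β < u := by
        intro t ht
        have h := hfK _ (subset_convexHull ℝ G (mem_image_of_mem _ ht))
        rwa [hdecomp] at h
      have hpf : u < f (p, 0) + (W + ε) * β := by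
        have h := hfz
        rwa [hdecomp] at h
      have hvpW : valueFn A p ≤ W := le_csSup hWSbdd hp_mem
      have hβpos : 0 < β := by
        rcases le_or_gt β 0 with hβ | hβ
        · exfalso
          have h1 := hfS p hp
          nlinarith [mul_nonneg (by linarith : (0:ℝ) ≤ W + ε - valueFn A p)
            (neg_nonneg.2 hβ)]
        · exact hβ
      have hg : ∀ t : Θ → ℝ, f (t, 0) = ∑ θ, t θ * f (Pi.single θ 1, 0) := by
        intro t
        have ht : ((t, (0:ℝ)) : (Θ → ℝ) × ℝ)
            = ∑ θ, t θ • (((Pi.single θ 1 : Θ → ℝ), (0:ℝ)) : (Θ → ℝ) × ℝ) := by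
          rw [Prod.ext_iff]
          constructor
          · rw [Prod.fst_sum]
            simpa [Prod.smul_mk] using stmt12.basis_decomp t
          · rw [Prod.snd_sum]
            simp
        rw [ht, map_sum]
        exact Finset.sum_congr rfl fun θ _ => by rw [_root_.map_smul, smul_eq_mul]
      have hlin : ∀ t : Θ → ℝ,
          u / β + ∑ θ, (-(f (Pi.single θ 1, 0)) / β) * t θ = (u - f (t, 0)) / β := by
        intro t
        rw [hg t,
          show (∑ θ, (-(f (Pi.single θ 1, 0)) / β) * t θ)
              = (∑ θ, -(t θ * f (Pi.single θ 1, 0))) / β from by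
            rw [Finset.sum_div]; exact Finset.sum_congr rfl fun θ _ => by ring,
          ← add_div, Finset.sum_neg_distrib, ← sub_eq_add_neg]
      refine le_trans (csInf_le hISbdd
        ⟨u / β, fun θ => -(f (Pi.single θ 1, 0)) / β, ?_, rfl⟩) ?_
      · intro t htS
        rw [hlin t, le_div_iff₀ hβpos]
        have h := hfS t htS
        linarith
      · rw [hlin p, div_le_iff₀ hβpos]
        linarith
    by_contra hcon
    push_neg at hcon
    have h := key ((sInf IS - sSup WS) / 2) (by linarith)
    linarith
end
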